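/- For any Banach spaces X and Y, the numerical index of the space L_{w*}(X*,Y) of weak*-to-weak continuous bounded operators from X* to Y satisfies n(L_{w*}(X*,Y)) ≤ min{ n(X), n(Y) }. -/

import Mathlib

open Metric Set

/-- The numerical radius of a bounded linear operator `T` on a normed space `X` over `𝕜`:
`v(T) = sup { ‖x*(Tx)‖ : x ∈ S_X, x* ∈ S_{X*}, x*(x) = 1 }`. -/
noncomputable def numRadius (𝕜 : Type*) [RCLike 𝕜] {X : Type*} [NormedAddCommGroup X]
    [NormedSpace 𝕜 X] (T : X →L[𝕜] X) : ℝ :=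
  sSup {r : ℝ | ∃ (x : X) (f : X →L[𝕜] 𝕜), ‖x‖ = 1 ∧ ‖f‖ = 1 ∧ f x = 1 ∧ r = ‖f (T x)‖}

/-- The numerical index of a normed space: `n(X) = inf { v(T) : T ∈ L(X), ‖T‖ = 1 }`. -/
noncomputable def numIndex (𝕜 : Type*) [RCLike 𝕜] (X : Type*) [NormedAddCommGroup X]
    [NormedSpace 𝕜 X] : ℝ :=
  sInf {r : ℝ | ∃ T : X →L[𝕜] X, ‖T‖ = 1 ∧ r = numRadius 𝕜 T}

/-- `v_δ(T)` computed with points taken in `A ⊆ B_X` and functionals in `B ⊆ B_{X*}`. -/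
noncomputable def numRadiusDeltaOn (𝕜 : Type*) [RCLike 𝕜] {X : Type*} [NormedAddCommGroup X]
    [NormedSpace 𝕜 X] (T : X →L[𝕜] X) (A : Set X) (B : Set (X →L[𝕜] 𝕜)) (δ : ℝ) : ℝ :=
  sSup {r : ℝ | ∃ x ∈ A, ∃ f ∈ B, 1 - δ < RCLike.re (f x) ∧ r = ‖f (T x)‖}

/-- `Z` (together with the bounded bilinear map `t`) is the projective tensor product
`X ⊗̂_π Y`: it is complete, elementary tensors have norm `‖x‖‖y‖`, and the closed unit
ball of `Z` is the closed convex hull of `B_X ⊗ B_Y`. -/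
structure IsProjectiveTensorProduct (𝕜 : Type*) [RCLike 𝕜] {X Y Z : Type*}
    [NormedAddCommGroup X] [NormedSpace 𝕜 X] [NormedAddCommGroup Y] [NormedSpace 𝕜 Y]
    [NormedAddCommGroup Z] [NormedSpace 𝕜 Z] [NormedSpace ℝ Z] [IsScalarTower ℝ 𝕜 Z]
    (t : X →L[𝕜] Y →L[𝕜] Z) : Prop where
  complete : CompleteSpace Z
  norm_tmul : ∀ x y, ‖t x y‖ = ‖x‖ * ‖y‖
  ball_eq : closedBall (0 : Z) 1 = closure (convexHull ℝ
      {z : Z | ∃ x ∈ closedBall (0 : X) 1, ∃ y ∈ closedBall (0 : Y) 1, z = t x y})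

/-- `Z` (together with the bounded bilinear map `t`) is the injective tensor product
`X ⊗̂_ε Y`: it is complete, the span of elementary tensors is dense, and on that span
the norm is the injective tensor norm. -/
structure IsInjectiveTensorProduct (𝕜 : Type*) [RCLike 𝕜] {X Y Z : Type*}
    [NormedAddCommGroup X] [NormedSpace 𝕜 X] [NormedAddCommGroup Y] [NormedSpace 𝕜 Y]
    [NormedAddCommGroup Z] [NormedSpace 𝕜 Z] (t : X →L[𝕜] Y →L[𝕜] Z) : Prop where
  complete : CompleteSpace Z
  dense_span : Dense (Submodule.span 𝕜 {z : Z | ∃ x y, z = t x y} : Set Z)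
  norm_sum : ∀ (n : ℕ) (x : Fin n → X) (y : Fin n → Y),
    ‖∑ i, t (x i) (y i)‖ = sSup {r : ℝ | ∃ (f : X →L[𝕜] 𝕜) (g : Y →L[𝕜] 𝕜),
      ‖f‖ ≤ 1 ∧ ‖g‖ ≤ 1 ∧ r = ‖∑ i, f (x i) * g (y i)‖}

/-- A slice of a bounded set `A`: `{a ∈ A : Re f(a) > sup Re f(A) - δ}`. -/
def sliceOf (𝕜 : Type*) [RCLike 𝕜] {X : Type*} [NormedAddCommGroup X] [NormedSpace 𝕜 X]
    (A : Set X) (f : X →L[𝕜] 𝕜) (δ : ℝ) : Set X :=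
  {a ∈ A | sSup {r : ℝ | ∃ b ∈ A, r = RCLike.re (f b)} - δ < RCLike.re (f a)}

/-- A set `A` is slicely countably determined (SCD) if there is a countable determining
family of slices of `A`: any `B ⊆ A` meeting every slice of the family has
closed convex hull containing `A`. -/
def IsSCD (𝕜 : Type*) [RCLike 𝕜] {X : Type*} [NormedAddCommGroup X] [NormedSpace 𝕜 X]
    [NormedSpace ℝ X] [IsScalarTower ℝ 𝕜 X] (A : Set X) : Prop :=
  ∃ V : ℕ → Set X, (∀ n, ∃ (f : X →L[𝕜] 𝕜) (δ : ℝ), 0 < δ ∧ V n = sliceOf 𝕜 A f δ) ∧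
    ∀ B ⊆ A, (∀ n, (B ∩ V n).Nonempty) → A ⊆ closure (convexHull ℝ B)

/-- The Daugavet property: `‖Id + T‖ = 1 + ‖T‖` for every rank-one operator `T`. -/
def DaugavetProperty (𝕜 : Type*) [RCLike 𝕜] (X : Type*) [NormedAddCommGroup X]
    [NormedSpace 𝕜 X] : Prop :=
  ∀ T : X →L[𝕜] X, (∃ (f : X →L[𝕜] 𝕜) (x₀ : X), ∀ x, T x = f x • x₀) →
    ‖ContinuousLinearMap.id 𝕜 X + T‖ = 1 + ‖T‖
set_option maxHeartbeats 1600000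

section Aux

open RCLike ContinuousLinearMap

variable {𝕜 : Type*} [RCLike 𝕜]

lemma numRadius_nonneg {W : Type*} [NormedAddCommGroup W] [NormedSpace 𝕜 W]
    (T : W →L[𝕜] W) : 0 ≤ numRadius 𝕜 T := by
  apply Real.sSup_nonneg
  rintro r ⟨x, f, _, _, _, rfl⟩
  positivity

lemma numRadius_bddAbove {W : Type*} [NormedAddCommGroup W] [NormedSpace 𝕜 W]
    (T : W →L[𝕜] W) :
    BddAbove {r : ℝ | ∃ (x : W) (f : W →L[𝕜] 𝕜), ‖x‖ = 1 ∧ ‖f‖ = 1 ∧ f x = 1 ∧ r = ‖f (T x)‖} := by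
  refine ⟨‖T‖, ?_⟩
  rintro r ⟨x, f, hx, hf, hfx, rfl⟩
  calc ‖f (T x)‖ ≤ ‖f‖ * ‖T x‖ := f.le_opNorm _
    _ ≤ 1 * (‖T‖ * ‖x‖) := by rw [hf]; gcongr; exact T.le_opNorm x
    _ = ‖T‖ := by rw [hx]; ring

lemma pair_le_numRadius {W : Type*} [NormedAddCommGroup W] [NormedSpace 𝕜 W]
    (T : W →L[𝕜] W) {x : W} {f : W →L[𝕜] 𝕜} (hx : ‖x‖ = 1) (hf : ‖f‖ = 1) (hfx : f x = 1) :
    ‖f (T x)‖ ≤ numRadius 𝕜 T :=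
  le_csSup (numRadius_bddAbove T) ⟨x, f, hx, hf, hfx, rfl⟩

/-- Core lemma: a norm-one functional on `L(W)` taking value `1` at the identity has
real part at `A` bounded by any nonnegative bound `M` on the real parts of the spatial
numerical range of `A`. Elementary dissipativity/resolvent argument. -/
lemma re_state_le {W : Type*} [NormedAddCommGroup W] [NormedSpace 𝕜 W] [CompleteSpace W]
    (Λ : (W →L[𝕜] W) →ₗ[𝕜] 𝕜) (hb : ∀ R, ‖Λ R‖ ≤ ‖R‖) (h1 : Λ 1 = 1)
    (A : W →L[𝕜] W) (M : ℝ) (hM0 : 0 ≤ M)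
    (hM : ∀ (x : W) (f : W →L[𝕜] 𝕜), ‖x‖ = 1 → ‖f‖ = 1 → f x = 1 →
      re (f (A x)) ≤ M) :
    re (Λ A) ≤ M := by
  set A' : W →L[𝕜] W := A - (M : 𝕜) • 1 with hA'def
  -- dissipativity of A'
  have key : ∀ (α : ℝ), 0 ≤ α → ∀ z : W, ‖z‖ ≤ ‖((1 : W →L[𝕜] W) - (α : 𝕜) • A') z‖ := by
    intro α hα z
    rcases eq_or_ne z 0 with rfl | hz
    · simp
    obtain ⟨f, hf1, hfz⟩ := exists_dual_vector 𝕜 z (norm_ne_zero_iff.2 hz)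
    have hz0 : ‖z‖ ≠ 0 := norm_ne_zero_iff.2 hz
    have hzpos : (0:ℝ) < ‖z‖ := lt_of_le_of_ne (norm_nonneg z) (Ne.symm hz0)
    have hreAz : re (f (A z)) ≤ M * ‖z‖ := by
      have hu : ‖((‖z‖⁻¹ : ℝ) : 𝕜) • z‖ = 1 := by
        rw [norm_smul ((‖z‖⁻¹ : ℝ) : 𝕜) z, RCLike.norm_ofReal, abs_of_nonneg (by positivity),
          inv_mul_cancel₀ hz0]
      have hfu : f (((‖z‖⁻¹ : ℝ) : 𝕜) • z) = 1 := by
        rw [map_smul, hfz, smul_eq_mul, ← RCLike.ofReal_mul, inv_mul_cancel₀ hz0,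
          RCLike.ofReal_one]
      have h := hM _ f hu hf1 hfu
      rw [map_smul, map_smul, smul_eq_mul, re_ofReal_mul] at h
      have h2 : re (f (A z)) = ‖z‖ * (‖z‖⁻¹ * re (f (A z))) := by
        rw [← mul_assoc, mul_inv_cancel₀ hz0, one_mul]
      rw [h2, mul_comm M ‖z‖]
      exact mul_le_mul_of_nonneg_left h hzpos.le
    have hre' : re (f (A' z)) ≤ 0 := by
      have hfA' : f (A' z) = f (A z) - (M : 𝕜) * f z := by
        simp [hA'def, sub_apply, smul_apply, one_apply, map_sub, map_smul, smul_eq_mul]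
      rw [hfA', map_sub, re_ofReal_mul, hfz]
      simp only [RCLike.ofReal_re]
      nlinarith [hreAz]
    have expand : ((1 : W →L[𝕜] W) - (α : 𝕜) • A') z = z - (α : 𝕜) • A' z := by
      simp [sub_apply, smul_apply, one_apply]
    calc ‖z‖ = re (f z) := by rw [hfz]; simp
      _ ≤ re (f z) - α * re (f (A' z)) := by nlinarith
      _ = re (f (z - (α : 𝕜) • A' z)) := by
          rw [map_sub, map_smul, smul_eq_mul, map_sub, re_ofReal_mul]
      _ ≤ ‖f (z - (α : 𝕜) • A' z)‖ := re_le_norm _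
      _ ≤ ‖f‖ * ‖z - (α : 𝕜) • A' z‖ := f.le_opNorm _
      _ = ‖((1 : W →L[𝕜] W) - (α : 𝕜) • A') z‖ := by rw [hf1, one_mul, expand]
  -- resolvent bound
  have main : ∀ α : ℝ, 0 < α → α * ‖A'‖ < 1 →
      re (Λ A) ≤ M + α * (‖A‖ * ‖A'‖) := by
    intro α hα hα1
    have hnorm : ‖(α : 𝕜) • A'‖ < 1 := by
      rw [norm_smul ((α : 𝕜)) A', RCLike.norm_ofReal, abs_of_pos hα]; exact hα1
    set u : (W →L[𝕜] W)ˣ := Units.oneSub ((α : 𝕜) • A') hnorm with hu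
    set B : W →L[𝕜] W := ↑u⁻¹ with hB
    have huval : (u : W →L[𝕜] W) = 1 - (α : 𝕜) • A' := rfl
    have hBeq : ((1 : W →L[𝕜] W) - (α : 𝕜) • A') * B = 1 := by
      rw [hB, ← huval]; exact u.mul_inv
    have hBapp : ∀ y, ((1 : W →L[𝕜] W) - (α : 𝕜) • A') (B y) = y := by
      intro y
      have hcongr := congrArg (fun (c : W →L[𝕜] W) => c y) hBeq
      simpa [ContinuousLinearMap.mul_apply] using hcongr
    have hBnorm : ‖B‖ ≤ 1 := by
      apply opNorm_le_bound _ zero_le_one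
      intro y
      rw [one_mul]
      calc ‖B y‖ ≤ ‖((1 : W →L[𝕜] W) - (α : 𝕜) • A') (B y)‖ := key α hα.le _
        _ = ‖y‖ := by rw [hBapp]
    -- algebraic identity
    have hfact : ((1 : W →L[𝕜] W) + (α : 𝕜) • A) * ((1 : W →L[𝕜] W) - (α : 𝕜) • A')
        = (1 + (α : 𝕜) * (M : 𝕜)) • (1 : W →L[𝕜] W) - ((α : 𝕜)^2) • (A * A') := by
      rw [hA'def]
      simp only [smul_sub, smul_smul, mul_sub, sub_mul, add_mul, mul_add,
        one_mul, mul_one, smul_mul_assoc, mul_smul_comm, add_smul, one_smul, sq]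
      module
    have hcomb : (1 : W →L[𝕜] W) + (α : 𝕜) • A
        = (1 + (α : 𝕜) * (M : 𝕜)) • B - ((α : 𝕜)^2) • (A * A' * B) := by
      have h2 : ((1 : W →L[𝕜] W) + (α : 𝕜) • A) * (((1 : W →L[𝕜] W) - (α : 𝕜) • A') * B)
          = ((1 + (α : 𝕜) * (M : 𝕜)) • (1 : W →L[𝕜] W) - ((α : 𝕜)^2) • (A * A')) * B := by
        rw [← mul_assoc, hfact]
      rw [hBeq, mul_one] at h2
      rw [h2, sub_mul, smul_mul_assoc, smul_mul_assoc, one_mul, mul_assoc]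
    have hleft : re (Λ ((1 : W →L[𝕜] W) + (α : 𝕜) • A)) = 1 + α * re (Λ A) := by
      rw [map_add, map_smul, h1, smul_eq_mul]
      rw [map_add, re_ofReal_mul]
      simp
    have hABB : ‖A * A' * B‖ ≤ ‖A‖ * ‖A'‖ := by
      calc ‖A * A' * B‖ ≤ ‖A * A'‖ * ‖B‖ := norm_mul_le _ _
        _ ≤ ‖A * A'‖ * 1 := by gcongr
        _ = ‖A * A'‖ := mul_one _
        _ ≤ ‖A‖ * ‖A'‖ := norm_mul_le _ _
    have hright : re (Λ ((1 : W →L[𝕜] W) + (α : 𝕜) • A))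
        ≤ (1 + α * M) + α^2 * (‖A‖ * ‖A'‖) := by
      rw [hcomb, map_sub, map_smul, map_smul, smul_eq_mul, smul_eq_mul]
      calc re ((1 + (α : 𝕜) * (M : 𝕜)) * Λ B - ((α : 𝕜)^2) * Λ (A * A' * B))
          ≤ ‖(1 + (α : 𝕜) * (M : 𝕜)) * Λ B - ((α : 𝕜)^2) * Λ (A * A' * B)‖ := re_le_norm _
        _ ≤ ‖(1 + (α : 𝕜) * (M : 𝕜)) * Λ B‖ + ‖((α : 𝕜)^2) * Λ (A * A' * B)‖ := norm_sub_le _ _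
        _ = ‖(1 + (α : 𝕜) * (M : 𝕜))‖ * ‖Λ B‖ + ‖((α : 𝕜)^2)‖ * ‖Λ (A * A' * B)‖ := by
            rw [norm_mul, norm_mul]
        _ ≤ (1 + α * M) * 1 + α^2 * (‖A‖ * ‖A'‖) := by
            have e1 : ‖(1 + (α : 𝕜) * (M : 𝕜))‖ = 1 + α * M := by
              rw [show (1 + (α : 𝕜) * (M : 𝕜)) = (((1 + α * M : ℝ)) : 𝕜) by push_cast; ring,
                RCLike.norm_ofReal, abs_of_nonneg (by positivity)]
            have e2 : ‖((α : 𝕜)^2)‖ = α^2 := by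
              rw [show ((α : 𝕜)^2) = (((α^2 : ℝ)) : 𝕜) by push_cast; ring,
                RCLike.norm_ofReal, abs_of_nonneg (by positivity)]
            rw [e1, e2]
            have t1 : ‖Λ B‖ ≤ 1 := (hb B).trans hBnorm
            have t2 : ‖Λ (A * A' * B)‖ ≤ ‖A‖ * ‖A'‖ := (hb _).trans hABB
            have hp1 : (0:ℝ) ≤ 1 + α * M := by positivity
            have hp2 : (0:ℝ) ≤ α ^ 2 := by positivity
            exact add_le_add (mul_le_mul_of_nonneg_left t1 hp1)
              (mul_le_mul_of_nonneg_left t2 hp2)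
        _ = (1 + α * M) + α^2 * (‖A‖ * ‖A'‖) := by ring
    rw [hleft] at hright
    nlinarith [hright]
  -- take α → 0⁺
  apply le_of_forall_pos_le_add
  intro ε hε
  set C := ‖A‖ * ‖A'‖ with hC
  have hC0 : 0 ≤ C := by positivity
  set α := min (ε / (C + 1)) (1 / (‖A'‖ + 1)) with hαdef
  have hαpos : 0 < α := lt_min (by positivity) (by positivity)
  have hα1 : α * ‖A'‖ < 1 := by
    have h2 : α ≤ 1 / (‖A'‖ + 1) := min_le_right _ _
    have h3 : (0:ℝ) ≤ ‖A'‖ := norm_nonneg _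
    calc α * ‖A'‖ ≤ (1 / (‖A'‖ + 1)) * ‖A'‖ := mul_le_mul_of_nonneg_right h2 h3
      _ < 1 := by rw [div_mul_eq_mul_div, one_mul, div_lt_one (by positivity)]; linarith
  have hmain := main α hαpos hα1
  have h4 : α * C ≤ ε := by
    have h5 : α ≤ ε / (C + 1) := min_le_left _ _
    calc α * C ≤ (ε / (C + 1)) * C := mul_le_mul_of_nonneg_right h5 hC0
      _ ≤ ε := by rw [div_mul_eq_mul_div, div_le_iff₀ (by positivity)]; nlinarith
  linarith

/-- Any "state" of `L(W)` (norm-one functional taking value one at the identity) is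
bounded by the spatial numerical radius. -/
lemma state_le_numRadius {W : Type*} [NormedAddCommGroup W] [NormedSpace 𝕜 W] [CompleteSpace W]
    (Λ : (W →L[𝕜] W) →ₗ[𝕜] 𝕜) (hb : ∀ R, ‖Λ R‖ ≤ ‖R‖) (h1 : Λ 1 = 1)
    (S : W →L[𝕜] W) : ‖Λ S‖ ≤ numRadius 𝕜 S := by
  rcases eq_or_ne (Λ S) 0 with h | h
  · rw [h, norm_zero]; exact numRadius_nonneg S
  set c : 𝕜 := (‖Λ S‖ : 𝕜) / Λ S with hc
  have hΛS0 : ‖Λ S‖ ≠ 0 := norm_ne_zero_iff.2 h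
  have hc1 : ‖c‖ = 1 := by
    rw [hc, norm_div, RCLike.norm_ofReal, abs_of_nonneg (norm_nonneg _),
      div_self hΛS0]
  have hcS : c * Λ S = (‖Λ S‖ : 𝕜) := div_mul_cancel₀ _ h
  have key := re_state_le Λ hb h1 (c • S) (numRadius 𝕜 S) (numRadius_nonneg S) ?_
  · rw [map_smul, smul_eq_mul, hcS] at key
    simpa using key
  · intro x f hx hf hfx
    have happ : f ((c • S) x) = c * f (S x) := by
      rw [smul_apply, map_smul, smul_eq_mul]
    rw [happ]
    calc re (c * f (S x)) ≤ ‖c * f (S x)‖ := re_le_norm _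
      _ = ‖f (S x)‖ := by rw [norm_mul, hc1, one_mul]
      _ ≤ numRadius 𝕜 S := pair_le_numRadius S hx hf hfx

lemma numIndex_of_subsingleton {W : Type*} [NormedAddCommGroup W] [NormedSpace 𝕜 W]
    (h : Subsingleton W) : numIndex 𝕜 W = 0 := by
  have hempty : {r : ℝ | ∃ T : W →L[𝕜] W, ‖T‖ = 1 ∧ r = numRadius 𝕜 T} = ∅ := by
    ext r
    simp only [Set.mem_setOf_eq, Set.mem_empty_iff_false, iff_false, not_exists]
    rintro T ⟨hT, -⟩
    have hT0 : T = 0 := ContinuousLinearMap.ext fun x => Subsingleton.elim _ _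
    rw [hT0, norm_zero] at hT
    exact zero_ne_one hT
  rw [numIndex, hempty, Real.sInf_empty]

end Aux

set_option linter.unusedSectionVars false

section MainConstr

open RCLike ContinuousLinearMap NormedSpace

variable {𝕜 X Y : Type*} [RCLike 𝕜]
    [NormedAddCommGroup X] [NormedSpace 𝕜 X] [CompleteSpace X]
    [NormedAddCommGroup Y] [NormedSpace 𝕜 Y] [CompleteSpace Y]

/-- The rank-one operator `X* → Y`, `f ↦ f x • y`. -/
noncomputable def rankOne (𝕜 : Type*) [RCLike 𝕜] {X Y : Type*} [NormedAddCommGroup X]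
    [NormedSpace 𝕜 X] [NormedAddCommGroup Y] [NormedSpace 𝕜 Y] (x : X) (y : Y) :
    StrongDual 𝕜 X →L[𝕜] Y :=
  (NormedSpace.inclusionInDoubleDual 𝕜 X x).smulRight y

lemma rankOne_apply (x : X) (y : Y) (f : StrongDual 𝕜 X) :
    rankOne 𝕜 x y f = f x • y := rfl

lemma rankOne_norm (x : X) (y : Y) : ‖rankOne 𝕜 x y‖ = ‖x‖ * ‖y‖ := by
  rw [rankOne, ContinuousLinearMap.norm_smulRight_apply]
  congr 1
  exact (NormedSpace.inclusionInDoubleDualLi 𝕜 (E := X)).norm_map x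

/-- Precomposition `X* → X*` with an operator on `X`. -/
noncomputable def precompD (𝕜 : Type*) [RCLike 𝕜] {X : Type*} [NormedAddCommGroup X]
    [NormedSpace 𝕜 X] (S : X →L[𝕜] X) :
    StrongDual 𝕜 X →L[𝕜] StrongDual 𝕜 X :=
  (ContinuousLinearMap.compL 𝕜 X X 𝕜).flip S

lemma precompD_apply (S : X →L[𝕜] X) (f : StrongDual 𝕜 X) :
    precompD 𝕜 S f = f.comp S := rfl

lemma precompD_norm_le (S : X →L[𝕜] X) : ‖precompD 𝕜 S‖ ≤ ‖S‖ := by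
  apply opNorm_le_bound _ (norm_nonneg S)
  intro f
  calc ‖precompD 𝕜 S f‖ = ‖f.comp S‖ := rfl
    _ ≤ ‖f‖ * ‖S‖ := opNorm_comp_le _ _
    _ = ‖S‖ * ‖f‖ := mul_comm _ _

lemma precompD_one : precompD 𝕜 (1 : X →L[𝕜] X) = ContinuousLinearMap.id 𝕜 _ := by
  ext f x; rfl

variable (Z : Submodule 𝕜 (StrongDual 𝕜 X →L[𝕜] Y))

section WithhZ

variable (hZ : ∀ T : StrongDual 𝕜 X →L[𝕜] Y, T ∈ Z ↔
      Continuous (fun f : WeakDual 𝕜 X => toWeakSpace 𝕜 Y (T (WeakDual.toStrongDual f))))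

include hZ

lemma rankOne_mem (x : X) (y : Y) : rankOne 𝕜 x y ∈ Z := by
  rw [hZ]
  have h1 : Continuous fun f : WeakDual 𝕜 X => ((WeakDual.toStrongDual f) x : 𝕜) :=
    WeakDual.eval_continuous x
  have h2 : Continuous fun c : 𝕜 => toWeakSpace 𝕜 Y (c • y) :=
    (toWeakSpaceCLM 𝕜 Y).continuous.comp (continuous_id.smul continuous_const)
  exact h2.comp h1

lemma post_mem {T : StrongDual 𝕜 X →L[𝕜] Y} (hT : T ∈ Z) (R : Y →L[𝕜] Y) :
    R.comp T ∈ Z := by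
  rw [hZ] at hT ⊢
  exact (WeakSpace.map R).continuous.comp hT

lemma pre_mem {T : StrongDual 𝕜 X →L[𝕜] Y} (hT : T ∈ Z) (S : X →L[𝕜] X) :
    T.comp (precompD 𝕜 S) ∈ Z := by
  rw [hZ] at hT ⊢
  have hg : Continuous fun f : WeakDual 𝕜 X =>
      StrongDual.toWeakDual ((WeakDual.toStrongDual f).comp S) := by
    apply WeakDual.continuous_of_continuous_eval
    intro x
    exact WeakDual.eval_continuous (S x)
  exact hT.comp hg

/-- Post-composition by `R : Y → Y`, as a linear map on `Z`. -/
noncomputable def postLin (R : Y →L[𝕜] Y) : ↥Z →ₗ[𝕜] ↥Z where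
  toFun T := ⟨R.comp (T : StrongDual 𝕜 X →L[𝕜] Y), post_mem Z hZ T.2 R⟩
  map_add' a b := Subtype.ext (by
    show R.comp (((a + b : ↥Z) : StrongDual 𝕜 X →L[𝕜] Y)) = _
    rw [Submodule.coe_add, ContinuousLinearMap.comp_add]
    rfl)
  map_smul' c a := Subtype.ext (by
    show R.comp (((c • a : ↥Z) : StrongDual 𝕜 X →L[𝕜] Y)) = _
    rw [Submodule.coe_smul, ContinuousLinearMap.comp_smul]
    rfl)

lemma postLin_apply (R : Y →L[𝕜] Y) (T : ↥Z) :
    (postLin Z hZ R T : StrongDual 𝕜 X →L[𝕜] Y)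
      = R.comp (T : StrongDual 𝕜 X →L[𝕜] Y) := rfl

/-- Pre-composition by the dual map of `S : X → X`, as a linear map on `Z`. -/
noncomputable def preLin (S : X →L[𝕜] X) : ↥Z →ₗ[𝕜] ↥Z where
  toFun T := ⟨(T : StrongDual 𝕜 X →L[𝕜] Y).comp (precompD 𝕜 S), pre_mem Z hZ T.2 S⟩
  map_add' a b := Subtype.ext (by
    show (((a + b : ↥Z) : StrongDual 𝕜 X →L[𝕜] Y)).comp (precompD 𝕜 S) = _
    rw [Submodule.coe_add, ContinuousLinearMap.add_comp]
    rfl)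
  map_smul' c a := Subtype.ext (by
    show (((c • a : ↥Z) : StrongDual 𝕜 X →L[𝕜] Y)).comp (precompD 𝕜 S) = _
    rw [Submodule.coe_smul, ContinuousLinearMap.smul_comp]
    rfl)

lemma preLin_apply (S : X →L[𝕜] X) (T : ↥Z) :
    (preLin Z hZ S T : StrongDual 𝕜 X →L[𝕜] Y)
      = (T : StrongDual 𝕜 X →L[𝕜] Y).comp (precompD 𝕜 S) := rfl

/-- `R ↦ R ∘ T` as a linear map `L(Y) → Z`. -/
noncomputable def postFunc (T : ↥Z) : (Y →L[𝕜] Y) →ₗ[𝕜] ↥Z where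
  toFun R := ⟨R.comp (T : StrongDual 𝕜 X →L[𝕜] Y), post_mem Z hZ T.2 R⟩
  map_add' a b := Subtype.ext (ContinuousLinearMap.add_comp a b _)
  map_smul' c a := Subtype.ext (ContinuousLinearMap.smul_comp c a _)

lemma postFunc_apply (T : ↥Z) (R : Y →L[𝕜] Y) :
    (postFunc Z hZ T R : StrongDual 𝕜 X →L[𝕜] Y)
      = R.comp (T : StrongDual 𝕜 X →L[𝕜] Y) := rfl

/-- `R ↦ T ∘ R*` as a linear map `L(X) → Z`. -/
noncomputable def preFunc (T : ↥Z) : (X →L[𝕜] X) →ₗ[𝕜] ↥Z where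
  toFun R := ⟨(T : StrongDual 𝕜 X →L[𝕜] Y).comp (precompD 𝕜 R), pre_mem Z hZ T.2 R⟩
  map_add' a b := Subtype.ext (by
    show (T : StrongDual 𝕜 X →L[𝕜] Y).comp (precompD 𝕜 (a + b)) = _
    rw [show precompD 𝕜 (a + b) = precompD 𝕜 a + precompD 𝕜 b from
      map_add ((ContinuousLinearMap.compL 𝕜 X X 𝕜).flip) a b,
      ContinuousLinearMap.comp_add]
    rfl)
  map_smul' c a := Subtype.ext (by
    show (T : StrongDual 𝕜 X →L[𝕜] Y).comp (precompD 𝕜 (c • a)) = _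
    rw [show precompD 𝕜 (c • a) = c • precompD 𝕜 a from
      map_smul ((ContinuousLinearMap.compL 𝕜 X X 𝕜).flip) c a,
      ContinuousLinearMap.comp_smul]
    rfl)

lemma preFunc_apply (T : ↥Z) (R : X →L[𝕜] X) :
    (preFunc Z hZ T R : StrongDual 𝕜 X →L[𝕜] Y)
      = (T : StrongDual 𝕜 X →L[𝕜] Y).comp (precompD 𝕜 R) := rfl

end WithhZ

end MainConstr

section Key

open RCLike ContinuousLinearMap NormedSpace

variable {𝕜 : Type*} [RCLike 𝕜]

lemma bddBelow_numIndex_set {W : Type*} [NormedAddCommGroup W] [NormedSpace 𝕜 W] :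
    BddBelow {r : ℝ | ∃ T : W →L[𝕜] W, ‖T‖ = 1 ∧ r = numRadius 𝕜 T} := by
  refine ⟨0, ?_⟩
  rintro r ⟨T, -, rfl⟩
  exact numRadius_nonneg T

/-- Generic transfer lemma: if `V` carries a norm-one operator `Φ` (given as a linear map `ℓ`
with the stated norm bounds) all of whose "states" factor through states of `L(W)` evaluated
at `S`, then `n(V) ≤ v(S)`. -/
lemma numIndex_le_numRadius_of {V W : Type*} [NormedAddCommGroup V] [NormedSpace 𝕜 V]
    [NormedAddCommGroup W] [NormedSpace 𝕜 W] [CompleteSpace W]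
    (S : W →L[𝕜] W) (ℓ : V →ₗ[𝕜] V)
    (hbound : ∀ T : V, ‖ℓ T‖ ≤ ‖T‖)
    (hge : ∀ c : ℝ, 0 ≤ c → c < 1 → ∃ T : V, ‖T‖ ≤ 1 ∧ c < ‖ℓ T‖)
    (hstate : ∀ (T : V) (φ : V →L[𝕜] 𝕜), ‖T‖ = 1 → ‖φ‖ = 1 → φ T = 1 →
      ∃ Λ : (W →L[𝕜] W) →ₗ[𝕜] 𝕜, (∀ R, ‖Λ R‖ ≤ ‖R‖) ∧ Λ 1 = 1 ∧ φ (ℓ T) = Λ S) :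
    numIndex 𝕜 V ≤ numRadius 𝕜 S := by
  set Φ : V →L[𝕜] V := ℓ.mkContinuous 1 (fun T => by
    rw [one_mul]; exact hbound T) with hΦdef
  have hΦapp : ∀ T, Φ T = ℓ T := fun T => rfl
  have hle : ‖Φ‖ ≤ 1 := ℓ.mkContinuous_norm_le zero_le_one _
  have hge1 : 1 ≤ ‖Φ‖ := by
    apply le_of_forall_lt
    intro c hc
    rcases lt_or_ge c 0 with hc0 | hc0
    · exact hc0.trans_le (norm_nonneg _)
    obtain ⟨T, hT1, hTc⟩ := hge c hc0 hc
    calc c < ‖ℓ T‖ := hTc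
      _ = ‖Φ T‖ := by rw [hΦapp]
      _ ≤ ‖Φ‖ * ‖T‖ := Φ.le_opNorm T
      _ ≤ ‖Φ‖ * 1 := by gcongr
      _ = ‖Φ‖ := mul_one _
  have hΦ : ‖Φ‖ = 1 := le_antisymm hle hge1
  have hrad : numRadius 𝕜 Φ ≤ numRadius 𝕜 S := by
    apply Real.sSup_le _ (numRadius_nonneg S)
    rintro r ⟨T, φ, hT, hφ, hφT, rfl⟩
    obtain ⟨Λ, hb, h1, hval⟩ := hstate T φ hT hφ hφT
    have : φ (Φ T) = Λ S := by rw [hΦapp]; exact hval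
    rw [this]
    exact state_le_numRadius Λ hb h1 S
  calc numIndex 𝕜 V ≤ numRadius 𝕜 Φ := csInf_le bddBelow_numIndex_set ⟨Φ, hΦ, rfl⟩
    _ ≤ numRadius 𝕜 S := hrad

variable {X Y : Type*}
    [NormedAddCommGroup X] [NormedSpace 𝕜 X] [CompleteSpace X]
    [NormedAddCommGroup Y] [NormedSpace 𝕜 Y] [CompleteSpace Y]
    (Z : Submodule 𝕜 (StrongDual 𝕜 X →L[𝕜] Y))
    (hZ : ∀ T : StrongDual 𝕜 X →L[𝕜] Y, T ∈ Z ↔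
      Continuous (fun f : WeakDual 𝕜 X => toWeakSpace 𝕜 Y (T (WeakDual.toStrongDual f))))

noncomputable instance instNormedAddCommGroupZ : NormedAddCommGroup ↥Z :=
  Submodule.normedAddCommGroup (E := StrongDual 𝕜 X →L[𝕜] Y) Z

noncomputable instance instNormedSpaceZ : NormedSpace 𝕜 ↥Z :=
  Submodule.normedSpace (E := StrongDual 𝕜 X →L[𝕜] Y) Z

lemma subsingleton_Z_of_X (h : Subsingleton X) :
    Subsingleton (StrongDual 𝕜 X →L[𝕜] Y) := by
  exact ⟨fun a b => ContinuousLinearMap.ext fun f => by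
    have hf : f = 0 := ContinuousLinearMap.ext fun x => by
      rw [Subsingleton.elim x 0, map_zero, map_zero]
    rw [hf, map_zero, map_zero]⟩

lemma subsingleton_Z_of_Y (h : Subsingleton Y) :
    Subsingleton (StrongDual 𝕜 X →L[𝕜] Y) :=
  ⟨fun a b => ContinuousLinearMap.ext fun f => Subsingleton.elim _ _⟩

lemma norm_mk_Z (v : StrongDual 𝕜 X →L[𝕜] Y) (h : v ∈ Z) :
    ‖(⟨v, h⟩ : ↥Z)‖ = ‖v‖ := rfl

include hZ

lemma keyY : numIndex 𝕜 ↥Z ≤ numIndex 𝕜 Y := by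
  by_cases hSY : ∃ S : Y →L[𝕜] Y, ‖S‖ = 1
  · obtain ⟨S₀, hS₀⟩ := hSY
    rw [show numIndex 𝕜 Y
      = sInf {r : ℝ | ∃ T : Y →L[𝕜] Y, ‖T‖ = 1 ∧ r = numRadius 𝕜 T} from rfl]
    refine le_csInf ⟨numRadius 𝕜 S₀, S₀, hS₀, rfl⟩ ?_
    rintro b ⟨S, hS, rfl⟩
    by_cases hX : Subsingleton X
    · have h1 : Subsingleton (StrongDual 𝕜 X →L[𝕜] Y) := subsingleton_Z_of_X hX
      have h2 : Subsingleton ↥Z := ⟨fun a b => Subtype.ext (Subsingleton.elim _ _)⟩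
      rw [numIndex_of_subsingleton h2]
      exact numRadius_nonneg S
    have : Nontrivial X := not_subsingleton_iff_nontrivial.mp hX
    refine numIndex_le_numRadius_of S (postLin Z hZ S) ?_ ?_ ?_
    · -- bound
      intro T
      rw [show ‖postLin Z hZ S T‖
          = ‖S.comp (T : StrongDual 𝕜 X →L[𝕜] Y)‖ from rfl]
      calc ‖S.comp (T : StrongDual 𝕜 X →L[𝕜] Y)‖
          ≤ ‖S‖ * ‖(T : StrongDual 𝕜 X →L[𝕜] Y)‖ := opNorm_comp_le _ _
        _ = ‖T‖ := by rw [hS, one_mul]; rfl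
    · -- lower bound data
      intro c hc0 hc1
      obtain ⟨y, hy1, hyc⟩ := S.exists_lt_apply_of_lt_opNorm
        (show c < ‖S‖ by rw [hS]; exact hc1)
      obtain ⟨x₁, hx₁⟩ := exists_ne (0 : X)
      have hx₁0 : ‖x₁‖ ≠ 0 := norm_ne_zero_iff.2 hx₁
      set x₀ : X := ((‖x₁‖⁻¹ : ℝ) : 𝕜) • x₁ with hx₀def
      have hx₀ : ‖x₀‖ = 1 := by
        rw [hx₀def, norm_smul ((‖x₁‖⁻¹ : ℝ) : 𝕜) x₁, RCLike.norm_ofReal,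
          abs_of_nonneg (by positivity), inv_mul_cancel₀ hx₁0]
      refine ⟨⟨rankOne 𝕜 x₀ y, rankOne_mem Z hZ x₀ y⟩, ?_, ?_⟩
      · rw [norm_mk_Z, rankOne_norm, hx₀, one_mul]
        exact hy1.le
      · have happ : (postLin Z hZ S ⟨rankOne 𝕜 x₀ y, rankOne_mem Z hZ x₀ y⟩
            : StrongDual 𝕜 X →L[𝕜] Y) = rankOne 𝕜 x₀ (S y) := by
          rw [postLin_apply]
          ext f
          show S (rankOne 𝕜 x₀ y f) = rankOne 𝕜 x₀ (S y) f
          rw [rankOne_apply, rankOne_apply, map_smul]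
        rw [show ‖postLin Z hZ S ⟨rankOne 𝕜 x₀ y, rankOne_mem Z hZ x₀ y⟩‖
            = ‖(postLin Z hZ S ⟨rankOne 𝕜 x₀ y, rankOne_mem Z hZ x₀ y⟩
              : StrongDual 𝕜 X →L[𝕜] Y)‖ from rfl, happ, rankOne_norm, hx₀, one_mul]
        exact hyc
    · -- states
      intro T φ hT hφ hφT
      refine ⟨((φ : ↥Z →ₗ[𝕜] 𝕜).comp (postFunc Z hZ T)), ?_, ?_, ?_⟩
      · intro R
        show ‖φ (postFunc Z hZ T R)‖ ≤ ‖R‖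
        calc ‖φ (postFunc Z hZ T R)‖
            ≤ ‖φ‖ * ‖postFunc Z hZ T R‖ := φ.le_opNorm _
          _ = ‖R.comp (T : StrongDual 𝕜 X →L[𝕜] Y)‖ := by
              rw [hφ, one_mul]; rfl
          _ ≤ ‖R‖ * ‖(T : StrongDual 𝕜 X →L[𝕜] Y)‖ := opNorm_comp_le _ _
          _ = ‖R‖ := by
              rw [show ‖(T : StrongDual 𝕜 X →L[𝕜] Y)‖ = ‖T‖ from rfl, hT, mul_one]
      · show φ (postFunc Z hZ T 1) = 1
        have hTT : postFunc Z hZ T 1 = T := by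
          apply Subtype.ext
          rw [postFunc_apply, ContinuousLinearMap.one_def, ContinuousLinearMap.id_comp]
        rw [hTT, hφT]
      · rfl
  · have hsubY : Subsingleton Y := by
      by_contra hns
      rw [not_subsingleton_iff_nontrivial] at hns
      exact hSY ⟨ContinuousLinearMap.id 𝕜 Y, ContinuousLinearMap.norm_id⟩
    have h1 : Subsingleton (StrongDual 𝕜 X →L[𝕜] Y) := subsingleton_Z_of_Y hsubY
    have h2 : Subsingleton ↥Z := ⟨fun a b => Subtype.ext (Subsingleton.elim _ _)⟩
    rw [numIndex_of_subsingleton h2]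
    have hempty : {r : ℝ | ∃ T : Y →L[𝕜] Y, ‖T‖ = 1 ∧ r = numRadius 𝕜 T} = ∅ := by
      ext r
      simp only [Set.mem_setOf_eq, Set.mem_empty_iff_false, iff_false, not_exists]
      rintro T ⟨hT, -⟩
      exact hSY ⟨T, hT⟩
    rw [show numIndex 𝕜 Y
      = sInf {r : ℝ | ∃ T : Y →L[𝕜] Y, ‖T‖ = 1 ∧ r = numRadius 𝕜 T} from rfl,
      hempty, Real.sInf_empty]

lemma keyX : numIndex 𝕜 ↥Z ≤ numIndex 𝕜 X := by
  by_cases hSX : ∃ S : X →L[𝕜] X, ‖S‖ = 1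
  · obtain ⟨S₀, hS₀⟩ := hSX
    rw [show numIndex 𝕜 X
      = sInf {r : ℝ | ∃ T : X →L[𝕜] X, ‖T‖ = 1 ∧ r = numRadius 𝕜 T} from rfl]
    refine le_csInf ⟨numRadius 𝕜 S₀, S₀, hS₀, rfl⟩ ?_
    rintro b ⟨S, hS, rfl⟩
    by_cases hY : Subsingleton Y
    · have h1 : Subsingleton (StrongDual 𝕜 X →L[𝕜] Y) := subsingleton_Z_of_Y hY
      have h2 : Subsingleton ↥Z := ⟨fun a b => Subtype.ext (Subsingleton.elim _ _)⟩
      rw [numIndex_of_subsingleton h2]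
      exact numRadius_nonneg S
    have : Nontrivial Y := not_subsingleton_iff_nontrivial.mp hY
    refine numIndex_le_numRadius_of S (preLin Z hZ S) ?_ ?_ ?_
    · -- bound
      intro T
      rw [show ‖preLin Z hZ S T‖
          = ‖(T : StrongDual 𝕜 X →L[𝕜] Y).comp (precompD 𝕜 S)‖ from rfl]
      calc ‖(T : StrongDual 𝕜 X →L[𝕜] Y).comp (precompD 𝕜 S)‖
          ≤ ‖(T : StrongDual 𝕜 X →L[𝕜] Y)‖ * ‖precompD 𝕜 S‖ := opNorm_comp_le _ _
        _ ≤ ‖(T : StrongDual 𝕜 X →L[𝕜] Y)‖ * 1 := by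
            gcongr
            rw [← hS]
            exact precompD_norm_le S
        _ = ‖T‖ := by rw [mul_one]; rfl
    · -- lower bound data
      intro c hc0 hc1
      obtain ⟨x, hx1, hxc⟩ := S.exists_lt_apply_of_lt_opNorm
        (show c < ‖S‖ by rw [hS]; exact hc1)
      obtain ⟨y₁, hy₁⟩ := exists_ne (0 : Y)
      have hy₁0 : ‖y₁‖ ≠ 0 := norm_ne_zero_iff.2 hy₁
      set y₀ : Y := ((‖y₁‖⁻¹ : ℝ) : 𝕜) • y₁ with hy₀def
      have hy₀ : ‖y₀‖ = 1 := by
        rw [hy₀def, norm_smul ((‖y₁‖⁻¹ : ℝ) : 𝕜) y₁, RCLike.norm_ofReal,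
          abs_of_nonneg (by positivity), inv_mul_cancel₀ hy₁0]
      refine ⟨⟨rankOne 𝕜 x y₀, rankOne_mem Z hZ x y₀⟩, ?_, ?_⟩
      · rw [norm_mk_Z, rankOne_norm, hy₀, mul_one]
        exact hx1.le
      · have happ : (preLin Z hZ S ⟨rankOne 𝕜 x y₀, rankOne_mem Z hZ x y₀⟩
            : StrongDual 𝕜 X →L[𝕜] Y) = rankOne 𝕜 (S x) y₀ := by
          rw [preLin_apply]
          ext f
          show rankOne 𝕜 x y₀ (f.comp S) = rankOne 𝕜 (S x) y₀ f
          rw [rankOne_apply, rankOne_apply]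
          rfl
        rw [show ‖preLin Z hZ S ⟨rankOne 𝕜 x y₀, rankOne_mem Z hZ x y₀⟩‖
            = ‖(preLin Z hZ S ⟨rankOne 𝕜 x y₀, rankOne_mem Z hZ x y₀⟩
              : StrongDual 𝕜 X →L[𝕜] Y)‖ from rfl, happ, rankOne_norm, hy₀, mul_one]
        exact hxc
    · -- states
      intro T φ hT hφ hφT
      refine ⟨((φ : ↥Z →ₗ[𝕜] 𝕜).comp (preFunc Z hZ T)), ?_, ?_, ?_⟩
      · intro R
        show ‖φ (preFunc Z hZ T R)‖ ≤ ‖R‖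
        calc ‖φ (preFunc Z hZ T R)‖
            ≤ ‖φ‖ * ‖preFunc Z hZ T R‖ := φ.le_opNorm _
          _ = ‖(T : StrongDual 𝕜 X →L[𝕜] Y).comp (precompD 𝕜 R)‖ := by
              rw [hφ, one_mul]; rfl
          _ ≤ ‖(T : StrongDual 𝕜 X →L[𝕜] Y)‖ * ‖precompD 𝕜 R‖ := opNorm_comp_le _ _
          _ ≤ 1 * ‖R‖ := by
              apply mul_le_mul _ (precompD_norm_le R) (norm_nonneg (precompD 𝕜 R)) zero_le_one
              rw [show ‖(T : StrongDual 𝕜 X →L[𝕜] Y)‖ = ‖T‖ from rfl, hT]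
          _ = ‖R‖ := one_mul _
      · show φ (preFunc Z hZ T 1) = 1
        have hTT : preFunc Z hZ T 1 = T := by
          apply Subtype.ext
          rw [preFunc_apply, precompD_one]
          exact ContinuousLinearMap.comp_id _
        rw [hTT, hφT]
      · rfl
  · have hsubX : Subsingleton X := by
      by_contra hns
      rw [not_subsingleton_iff_nontrivial] at hns
      exact hSX ⟨ContinuousLinearMap.id 𝕜 X, ContinuousLinearMap.norm_id⟩
    have h1 : Subsingleton (StrongDual 𝕜 X →L[𝕜] Y) := subsingleton_Z_of_X hsubX
    have h2 : Subsingleton ↥Z := ⟨fun a b => Subtype.ext (Subsingleton.elim _ _)⟩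
    rw [numIndex_of_subsingleton h2]
    have hempty : {r : ℝ | ∃ T : X →L[𝕜] X, ‖T‖ = 1 ∧ r = numRadius 𝕜 T} = ∅ := by
      ext r
      simp only [Set.mem_setOf_eq, Set.mem_empty_iff_false, iff_false, not_exists]
      rintro T ⟨hT, -⟩
      exact hSX ⟨T, hT⟩
    rw [show numIndex 𝕜 X
      = sInf {r : ℝ | ∃ T : X →L[𝕜] X, ‖T‖ = 1 ∧ r = numRadius 𝕜 T} from rfl,
      hempty, Real.sInf_empty]

end Key

/-- `n(L_{w*}(X*,Y)) ≤ min{n(X), n(Y)}`, where `L_{w*}(X*,Y)` is the space of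
bounded operators from `X*` to `Y` which are weak*-to-weak continuous, with the operator
norm. -/
theorem numIndex_weakStarContinuousOperators_le_min {𝕜 X Y : Type*} [RCLike 𝕜]
    [NormedAddCommGroup X] [NormedSpace 𝕜 X] [CompleteSpace X]
    [NormedAddCommGroup Y] [NormedSpace 𝕜 Y] [CompleteSpace Y]
    (Z : Submodule 𝕜 (StrongDual 𝕜 X →L[𝕜] Y))
    (hZ : ∀ T : StrongDual 𝕜 X →L[𝕜] Y, T ∈ Z ↔
      Continuous (fun f : WeakDual 𝕜 X => toWeakSpace 𝕜 Y (T (WeakDual.toStrongDual f)))) :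
    @numIndex 𝕜 _ ↥Z (Submodule.normedAddCommGroup (E := StrongDual 𝕜 X →L[𝕜] Y) Z)
      (Submodule.normedSpace (E := StrongDual 𝕜 X →L[𝕜] Y) Z) ≤ min (numIndex 𝕜 X) (numIndex 𝕜 Y) := by
  exact le_min (keyX Z hZ) (keyY Z hZ)
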